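/- Let C be a 3-MIPPC(n,M,q) over Q. Then there do not exist distinct elements a₁, a₂, a₃ ∈ Q and distinct vectors b₁, b₂, b₃ ∈ Q^{n−1} such that b₁, b₂ ∈ A¹_{a₁}, b₂, b₃ ∈ A¹_{a₂}, and b₁, b₃ ∈ A¹_{a₃}. -/
import Mathlib


/-- Codewords of length `m+1` over `Fin q`, written as a first coordinate together with the
vector of the remaining `m` coordinates. Descendant code of a sub-code. -/
def descS {m q : ℕ} (C' : Finset (Fin q × (Fin m → Fin q))) :
    Set (Fin q × (Fin m → Fin q)) :=
  {x | (∃ c ∈ C', c.1 = x.1) ∧ ∀ i, ∃ c ∈ C', c.2 i = x.2 i}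

/-- The multimedia `t`-IPP property for such codes. -/
def isMIPPCS {m q : ℕ} (t : ℕ) (C : Finset (Fin q × (Fin m → Fin q))) : Prop :=
  ∀ S : Set (Fin q × (Fin m → Fin q)),
    (∃ C' : Finset (Fin q × (Fin m → Fin q)),
        C' ⊆ C ∧ C'.Nonempty ∧ C'.card ≤ t ∧ descS C' = S) →
    ∃ c, ∀ C' : Finset (Fin q × (Fin m → Fin q)),
      C' ⊆ C → C'.Nonempty → C'.card ≤ t → descS C' = S → c ∈ C'

/-- `A¹_a`: the set of vectors of last coordinates of codewords whose first coordinate is `a`. -/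
def A1S {m q : ℕ} (C : Finset (Fin q × (Fin m → Fin q))) (a : Fin q) :
    Finset (Fin m → Fin q) :=
  (C.filter (fun c => c.1 = a)).image Prod.snd

lemma mem_A1S_iff {m q : ℕ} (C : Finset (Fin q × (Fin m → Fin q))) (a : Fin q)
    (b : Fin m → Fin q) : b ∈ A1S C a ↔ (a, b) ∈ C := by
  simp only [A1S, Finset.mem_image, Finset.mem_filter]
  constructor
  · rintro ⟨c, ⟨hc, h1⟩, h2⟩
    have : c = (a, b) := Prod.ext h1 h2
    rwa [this] at hc
  · intro h
    exact ⟨(a, b), ⟨h, rfl⟩, rfl⟩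

/-- In a 3-MIPPC, there is no triangle configuration among the `A¹`-sets. -/
theorem condII_of_mippc3 {m q : ℕ} (C : Finset (Fin q × (Fin m → Fin q)))
    (hC : isMIPPCS 3 C) :
    ¬ ∃ (a₁ a₂ a₃ : Fin q) (b₁ b₂ b₃ : Fin m → Fin q),
        a₁ ≠ a₂ ∧ a₁ ≠ a₃ ∧ a₂ ≠ a₃ ∧ b₁ ≠ b₂ ∧ b₁ ≠ b₃ ∧ b₂ ≠ b₃ ∧
        b₁ ∈ A1S C a₁ ∧ b₂ ∈ A1S C a₁ ∧ b₂ ∈ A1S C a₂ ∧ b₃ ∈ A1S C a₂ ∧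
        b₁ ∈ A1S C a₃ ∧ b₃ ∈ A1S C a₃ := by
  rintro ⟨a₁, a₂, a₃, b₁, b₂, b₃, ha12, ha13, ha23, hb12, hb13, hb23,
    h11, h21, h22, h32, h13, h33⟩
  rw [mem_A1S_iff] at h11 h21 h22 h32 h13 h33
  set C₁ : Finset (Fin q × (Fin m → Fin q)) := {(a₁, b₂), (a₂, b₃), (a₃, b₁)} with hC₁
  set C₂ : Finset (Fin q × (Fin m → Fin q)) := {(a₁, b₁), (a₂, b₂), (a₃, b₃)} with hC₂
  have hsub1 : C₁ ⊆ C := by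
    intro x hx
    simp only [hC₁, Finset.mem_insert, Finset.mem_singleton] at hx
    rcases hx with h | h | h <;> subst h <;> assumption
  have hsub2 : C₂ ⊆ C := by
    intro x hx
    simp only [hC₂, Finset.mem_insert, Finset.mem_singleton] at hx
    rcases hx with h | h | h <;> subst h <;> assumption
  have hcard1 : C₁.card ≤ 3 := by
    refine le_trans (Finset.card_insert_le _ _) ?_
    have := Finset.card_insert_le (α := Fin q × (Fin m → Fin q)) (a₂, b₃) {(a₃, b₁)}
    simp at this ⊢
    omega
  have hcard2 : C₂.card ≤ 3 := by
    refine le_trans (Finset.card_insert_le _ _) ?_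
    have := Finset.card_insert_le (α := Fin q × (Fin m → Fin q)) (a₂, b₂) {(a₃, b₃)}
    simp at this ⊢
    omega
  have hdesc : descS C₁ = descS C₂ := by
    ext x
    simp only [descS, hC₁, hC₂, Set.mem_setOf_eq, Finset.mem_insert, Finset.mem_singleton]
    constructor
    · rintro ⟨⟨c, hc, h1⟩, h2⟩
      constructor
      · rcases hc with h | h | h <;> subst h
        · exact ⟨(a₁, b₁), Or.inl rfl, h1⟩
        · exact ⟨(a₂, b₂), Or.inr (Or.inl rfl), h1⟩
        · exact ⟨(a₃, b₃), Or.inr (Or.inr rfl), h1⟩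
      · intro i
        obtain ⟨c, hc, h1⟩ := h2 i
        rcases hc with h | h | h <;> subst h
        · exact ⟨(a₂, b₂), Or.inr (Or.inl rfl), h1⟩
        · exact ⟨(a₃, b₃), Or.inr (Or.inr rfl), h1⟩
        · exact ⟨(a₁, b₁), Or.inl rfl, h1⟩
    · rintro ⟨⟨c, hc, h1⟩, h2⟩
      constructor
      · rcases hc with h | h | h <;> subst h
        · exact ⟨(a₁, b₂), Or.inl rfl, h1⟩
        · exact ⟨(a₂, b₃), Or.inr (Or.inl rfl), h1⟩
        · exact ⟨(a₃, b₁), Or.inr (Or.inr rfl), h1⟩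
      · intro i
        obtain ⟨c, hc, h1⟩ := h2 i
        rcases hc with h | h | h <;> subst h
        · exact ⟨(a₃, b₁), Or.inr (Or.inr rfl), h1⟩
        · exact ⟨(a₁, b₂), Or.inl rfl, h1⟩
        · exact ⟨(a₂, b₃), Or.inr (Or.inl rfl), h1⟩
  obtain ⟨c, hc⟩ := hC (descS C₁) ⟨C₁, hsub1, ⟨_, Finset.mem_insert_self _ _⟩, hcard1, rfl⟩
  have h1 := hc C₁ hsub1 ⟨_, Finset.mem_insert_self _ _⟩ hcard1 rfl
  have h2 := hc C₂ hsub2 ⟨_, Finset.mem_insert_self _ _⟩ hcard2 hdesc.symm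
  simp only [hC₁, hC₂, Finset.mem_insert, Finset.mem_singleton] at h1 h2
  rcases h1 with h | h | h <;> rcases h2 with h' | h' | h' <;>
    rw [h'] at h <;> simp_all [Prod.ext_iff]
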